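/- For the quiver with two vertices of dimensions 1 and n, m arrows from the first to the second, p arrows from the second to the first, and one loop at the second vertex, equivalence classes of linear control systems Σ = (A,B,C) ∈ Mₙ(ℂ) × M_{n×m}(ℂ) × M_{p×n}(ℂ) (where Σ ∼ Σ' iff there is g ∈ GLₙ(ℂ) with A' = gAg⁻¹, B' = gB, C' = Cg⁻¹) are in bijection with isomorphism classes of representations of this quiver of dimension vector (1, n), where a representation assigns to the i-th arrow b_i the i-th column of B, to the j-th arrow c_j the j-th row of C, and A to the loop. -/

import Mathlib

open Matrix

/-- Equivalence classes of linear control systems `(A,B,C)` under the `GLₙ(ℂ)`-action are in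
bijection with isomorphism classes of representations of the quiver with dimension vector
`(1,n)` (`m` arrows left-to-right carrying the columns of `B`, `p` arrows right-to-left
carrying the rows of `C`, and a loop carrying `A`), via the natural assignment. -/
theorem stmt8 (n m p : ℕ) :
    ∃ e : Quot (fun (S S' : Matrix (Fin n) (Fin n) ℂ × Matrix (Fin n) (Fin m) ℂ ×
              Matrix (Fin p) (Fin n) ℂ) =>
            ∃ g : Matrix (Fin n) (Fin n) ℂ, IsUnit g ∧
              S'.1 = g * S.1 * g⁻¹ ∧ S'.2.1 = g * S.2.1 ∧ S'.2.2 = S.2.2 * g⁻¹) ≃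
          Quot (fun (R R' : Matrix (Fin n) (Fin n) ℂ × (Fin m → Fin n → ℂ) ×
              (Fin p → Fin n → ℂ)) =>
            ∃ (lam : ℂ) (g : Matrix (Fin n) (Fin n) ℂ), lam ≠ 0 ∧ IsUnit g ∧
              R'.1 = g * R.1 * g⁻¹ ∧
              (∀ i, R'.2.1 i = lam⁻¹ • g.mulVec (R.2.1 i)) ∧
              (∀ j, R'.2.2 j = lam • Matrix.vecMul (R.2.2 j) g⁻¹)),
      ∀ (A : Matrix (Fin n) (Fin n) ℂ) (B : Matrix (Fin n) (Fin m) ℂ)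
        (C : Matrix (Fin p) (Fin n) ℂ),
        e (Quot.mk _ (A, B, C)) =
          Quot.mk _ (A, fun i k => B k i, fun j k => C j k) := by
  let f : (Matrix (Fin n) (Fin n) ℂ × Matrix (Fin n) (Fin m) ℂ × Matrix (Fin p) (Fin n) ℂ) ≃
      (Matrix (Fin n) (Fin n) ℂ × (Fin m → Fin n → ℂ) × (Fin p → Fin n → ℂ)) :=
    { toFun := fun S => (S.1, fun i k => S.2.1 k i, fun j k => S.2.2 j k)
      invFun := fun R => (R.1, Matrix.of fun k i => R.2.1 i k, Matrix.of fun j k => R.2.2 j k)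
      left_inv := fun S => rfl
      right_inv := fun R => rfl }
  refine ⟨Quot.congr f ?_, fun A B C => rfl⟩
  rintro ⟨A, B, C⟩ ⟨A', B', C'⟩
  simp only [f, Equiv.coe_fn_mk]
  dsimp only [DFunLike.coe, EquivLike.coe]
  constructor
  · rintro ⟨g, hg, h1, h2, h3⟩
    refine ⟨1, g, one_ne_zero, hg, h1, fun i => ?_, fun j => ?_⟩
    · subst h2
      funext k
      simp [Matrix.mulVec, Matrix.mul_apply, dotProduct]
    · subst h3
      funext k
      simp [Matrix.vecMul, Matrix.mul_apply, dotProduct]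
  · rintro ⟨lam, g, hlam, hg, h1, h2, h3⟩
    have hinv : (lam⁻¹ • g)⁻¹ = lam • g⁻¹ := by
      have h := Matrix.inv_smul' (A := g) (Units.mk0 lam⁻¹ (inv_ne_zero hlam))
        ((isUnit_iff_isUnit_det g).mp hg)
      simpa [Units.smul_def] using h
    refine ⟨lam⁻¹ • g, ?_, ?_, ?_, ?_⟩
    · rw [isUnit_iff_isUnit_det] at hg ⊢
      rw [Matrix.det_smul]
      exact ((Ne.isUnit (inv_ne_zero hlam)).pow _).mul hg
    · rw [hinv, h1]
      simp [Matrix.smul_mul, Matrix.mul_smul, smul_smul, mul_inv_cancel₀ hlam]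
    · funext k i
      have := congrFun (h2 i) k
      simp only [Pi.smul_apply, smul_eq_mul] at this
      simp only [Matrix.mul_apply, Matrix.smul_apply, smul_eq_mul]
      rw [this]
      simp [Matrix.mulVec, dotProduct, Finset.mul_sum, mul_assoc]
    · funext j k
      have h := congrFun (h3 j) k
      simp only [Pi.smul_apply, smul_eq_mul] at h
      rw [hinv]
      simp only [Matrix.mul_apply, Matrix.smul_apply, smul_eq_mul]
      rw [h]
      simp [Matrix.vecMul, dotProduct, Finset.mul_sum, mul_comm, mul_left_comm]
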